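/- arXiv:1210.2478 — 4 statements merged into one kernel-verified Lean document; each statement's English description precedes it below -/
import Mathlib

section
/- For prime p = 5, the Minkowski sum Σ_5({0,1}) + Σ_5({0,2}) equals Σ_5({0,1,2,3}). -/
open scoped Pointwise

/-- The `k`-th digit of the `p`-adic expansion of `x`, i.e. `x = ∑ α_k p^k` with
`α_k ∈ {0,...,p-1}`. -/
noncomputable def padicDigit (p : ℕ) [Fact p.Prime] (x : ℤ_[p]) (k : ℕ) : ℕ :=
  x.appr (k + 1) / p ^ k % p

/-- `Σ_p(D)`: the set of `p`-adic integers all of whose `p`-adic digits lie in `D`. -/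
def SigmaSet (p : ℕ) [Fact p.Prime] (D : Set ℕ) : Set ℤ_[p] :=
  {x | ∀ k, padicDigit p x k ∈ D}

instance : Fact (Nat.Prime 5) := ⟨by norm_num⟩

namespace Aux

variable {p : ℕ} [hp : Fact p.Prime]

/-- partial sums of a digit sequence -/
def S (p : ℕ) (d : ℕ → ℕ) (n : ℕ) : ℕ := ∑ i ∈ Finset.range n, d i * p ^ i

lemma S_succ (d : ℕ → ℕ) (n : ℕ) : S p d (n + 1) = S p d n + d n * p ^ n := by
  simp [S, Finset.sum_range_succ]

lemma S_lt (d : ℕ → ℕ) (hd : ∀ i, d i < p) (n : ℕ) : S p d n < p ^ n := by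
  induction n with
  | zero => simp [S]
  | succ n ih =>
    rw [S_succ, pow_succ]
    have h1 : d n * p ^ n ≤ (p - 1) * p ^ n :=
      Nat.mul_le_mul_right _ (by have := hd n; omega)
    have key : (p - 1) * p ^ n + p ^ n = p ^ n * p := by
      rcases Nat.exists_eq_succ_of_ne_zero hp.out.pos.ne' with ⟨k, rfl⟩
      simp [Nat.succ_sub_one]; ring
    omega

lemma S_digit (d : ℕ → ℕ) (hd : ∀ i, d i < p) (k : ℕ) :
    S p d (k + 1) / p ^ k % p = d k := by
  rw [S_succ]
  have hpk : 0 < p ^ k := pow_pos hp.out.pos k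
  rw [Nat.add_mul_div_right _ _ hpk, Nat.div_eq_of_lt (S_lt d hd k), zero_add,
    Nat.mod_eq_of_lt (hd k)]

lemma appr_unique (x : ℤ_[p]) (n m : ℕ) (hm : m < p ^ n)
    (h : x - (m : ℤ_[p]) ∈ Ideal.span {(p : ℤ_[p]) ^ n}) : x.appr n = m := by
  have h2 := PadicInt.appr_spec n x
  have h3 : ((x.appr n : ℤ_[p]) - m) ∈ Ideal.span {(p : ℤ_[p]) ^ n} := by
    have := Ideal.sub_mem _ h h2
    simpa using this
  rw [Ideal.mem_span_singleton] at h3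
  have h4 : (p : ℤ_[p]) ^ n ∣ (((x.appr n : ℤ) - m : ℤ) : ℤ_[p]) := by
    push_cast; exact h3
  rw [PadicInt.pow_p_dvd_int_iff] at h4
  have h5 : |((x.appr n : ℤ) - m)| < (p : ℤ) ^ n := by
    have ha := PadicInt.appr_lt x n
    have hm' : (m : ℤ) < (p : ℤ) ^ n := by exact_mod_cast hm
    have ha' : ((x.appr n : ℕ) : ℤ) < (p : ℤ) ^ n := by exact_mod_cast ha
    rw [abs_lt]; omega
  have := Int.eq_zero_of_abs_lt_dvd h4 h5
  omega

/-- every appr is the partial sum of the digits -/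
lemma appr_eq_S (x : ℤ_[p]) (n : ℕ) : x.appr n = S p (padicDigit p x) n := by
  induction n with
  | zero => simp [S, PadicInt.appr]
  | succ n ih =>
    have hmono : x.appr n ≤ x.appr (n + 1) := PadicInt.appr_mono x (Nat.le_succ n)
    obtain ⟨c, hc⟩ := PadicInt.dvd_appr_sub_appr x n (n + 1) (Nat.le_succ n)
    have hBA : x.appr (n + 1) = x.appr n + p ^ n * c := by omega
    have hAlt := PadicInt.appr_lt x n
    have hBlt := PadicInt.appr_lt x (n + 1)
    have hpk : 0 < p ^ n := pow_pos hp.out.pos n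
    have hcp : c < p := by
      rw [pow_succ] at hBlt
      have h2 : p ^ n * c < p ^ n * p := by omega
      exact lt_of_mul_lt_mul_left h2 (Nat.zero_le _)
    have hdig : padicDigit p x n = c := by
      unfold padicDigit
      rw [hBA, Nat.add_mul_div_left _ _ hpk, Nat.div_eq_of_lt hAlt, zero_add,
        Nat.mod_eq_of_lt hcp]
    rw [S_succ, ← ih, hdig, hBA, mul_comm c]

lemma padicDigit_lt (x : ℤ_[p]) (k : ℕ) : padicDigit p x k < p :=
  Nat.mod_lt _ hp.out.pos

lemma norm_S_sub_le (d : ℕ → ℕ) {n m : ℕ} (h : n ≤ m) :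
    ‖((S p d m : ℤ_[p]) - (S p d n : ℤ_[p]))‖ ≤ (p : ℝ) ^ (-n : ℤ) := by
  rw [PadicInt.norm_le_pow_iff_mem_span_pow, Ideal.mem_span_singleton]
  have : (S p d m : ℤ_[p]) - S p d n = ∑ i ∈ Finset.Ico n m, (d i : ℤ_[p]) * p ^ i := by
    have := Finset.sum_Ico_eq_sub (fun i => (d i : ℤ_[p]) * (p : ℤ_[p]) ^ i) h
    rw [this]
    simp [S]
  rw [this]
  apply Finset.dvd_sum
  intro i hi
  rw [Finset.mem_Ico] at hi
  exact Dvd.dvd.mul_left (pow_dvd_pow _ hi.1) _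

lemma tendsto_pow_neg : Filter.Tendsto (fun n : ℕ => (p : ℝ) ^ (-n : ℤ)) Filter.atTop (nhds 0) := by
  have h : ∀ n : ℕ, (p : ℝ) ^ (-n : ℤ) = ((p : ℝ)⁻¹) ^ n := by
    intro n; rw [zpow_neg, zpow_natCast, inv_pow]
  simp only [h]
  apply tendsto_pow_atTop_nhds_zero_of_lt_one (by positivity)
  have h1 : (1 : ℝ) < p := by exact_mod_cast hp.out.one_lt
  exact inv_lt_one_of_one_lt₀ h1

lemma exists_of_digits (d : ℕ → ℕ) :
    ∃ x : ℤ_[p], ∀ n, ‖x - (S p d n : ℤ_[p])‖ ≤ (p : ℝ) ^ (-n : ℤ) := by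
  set u : ℕ → ℤ_[p] := fun n => (S p d n : ℤ_[p]) with hu
  have hcau : CauchySeq u := by
    apply cauchySeq_of_le_geometric (r := (p : ℝ)⁻¹) (C := 1)
    · have h1 : (1 : ℝ) < p := by exact_mod_cast hp.out.one_lt
      exact inv_lt_one_of_one_lt₀ h1
    · intro n
      rw [dist_eq_norm, norm_sub_rev, one_mul]
      have := norm_S_sub_le (p := p) d (Nat.le_succ n)
      rw [zpow_neg, zpow_natCast, ← inv_pow] at this
      exact this
  obtain ⟨x, hx⟩ := cauchySeq_tendsto_of_complete hcau
  refine ⟨x, fun n => ?_⟩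
  have ht : Filter.Tendsto (fun m => ‖u m - u n‖) Filter.atTop (nhds ‖x - u n‖) :=
    ((hx.sub tendsto_const_nhds).norm)
  refine le_of_tendsto ht ?_
  filter_upwards [Filter.eventually_ge_atTop n] with m hm
  exact norm_S_sub_le d hm

lemma appr_eq_of_norm (x : ℤ_[p]) (d : ℕ → ℕ) (hd : ∀ i, d i < p)
    (h : ∀ n, ‖x - (S p d n : ℤ_[p])‖ ≤ (p : ℝ) ^ (-n : ℤ)) (n : ℕ) :
    x.appr n = S p d n := by
  apply appr_unique x n _ (S_lt d hd n)
  rw [← PadicInt.norm_le_pow_iff_mem_span_pow]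
  exact h n

lemma digit_eq_of_appr (x : ℤ_[p]) (d : ℕ → ℕ) (hd : ∀ i, d i < p)
    (h : ∀ n, x.appr n = S p d n) (k : ℕ) : padicDigit p x k = d k := by
  unfold padicDigit
  rw [h (k + 1), S_digit d hd k]

end Aux

open Aux

/-- Σ₅({0,1}) + Σ₅({0,2}) = Σ₅({0,1,2,3}) (Minkowski sum in ℤ₅). -/
theorem minkowski_sum_cantor_5_12 :
    SigmaSet 5 {0, 1} + SigmaSet 5 {0, 2} = SigmaSet 5 {0, 1, 2, 3} := by
  ext z
  simp only [Set.mem_add]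
  constructor
  · rintro ⟨x, hx, y, hy, rfl⟩
    intro k
    have hdx : ∀ i, padicDigit 5 x i ≤ 1 := by
      intro i; have := hx i
      simp only [Set.mem_insert_iff, Set.mem_singleton_iff] at this
      omega
    have hdy : ∀ i, padicDigit 5 y i ≤ 2 := by
      intro i; have := hy i
      simp only [Set.mem_insert_iff, Set.mem_singleton_iff] at this
      omega
    set d : ℕ → ℕ := fun i => padicDigit 5 x i + padicDigit 5 y i with hd
    have hdlt : ∀ i, d i < 5 := fun i => by have := hdx i; have := hdy i; simp [hd]; omega
    have happr : ∀ n, (x + y).appr n = S 5 d n := by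
      intro n
      apply appr_unique _ n _ (S_lt d hdlt n)
      have hS : (S 5 d n : ℤ_[5]) =
          (S 5 (padicDigit 5 x) n : ℤ_[5]) + (S 5 (padicDigit 5 y) n : ℤ_[5]) := by
        have : S 5 d n = S 5 (padicDigit 5 x) n + S 5 (padicDigit 5 y) n := by
          simp [S, hd, add_mul, Finset.sum_add_distrib]
        rw [this]; push_cast; ring
      rw [hS]
      have h1 : x - (S 5 (padicDigit 5 x) n : ℤ_[5]) ∈ Ideal.span {(5 : ℤ_[5]) ^ n} := by
        rw [← appr_eq_S]; exact PadicInt.appr_spec n x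
      have h2 : y - (S 5 (padicDigit 5 y) n : ℤ_[5]) ∈ Ideal.span {(5 : ℤ_[5]) ^ n} := by
        rw [← appr_eq_S]; exact PadicInt.appr_spec n y
      have := Ideal.add_mem _ h1 h2
      convert this using 1
      all_goals ring
    have := digit_eq_of_appr (x + y) d hdlt happr k
    rw [this]
    have := hdx k; have := hdy k
    simp only [Set.mem_insert_iff, Set.mem_singleton_iff, hd]
    omega
  · intro hz
    set d : ℕ → ℕ := fun i => padicDigit 5 z i with hdd
    have hd3 : ∀ i, d i ≤ 3 := by
      intro i; have := hz i
      simp only [Set.mem_insert_iff, Set.mem_singleton_iff] at this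
      simp only [hdd]
      omega
    set a : ℕ → ℕ := fun i => d i % 2 with ha
    set b : ℕ → ℕ := fun i => d i - d i % 2 with hb
    have hab : ∀ i, a i + b i = d i := fun i => by simp only [ha, hb]; omega
    have ha5 : ∀ i, a i < 5 := fun i => by simp only [ha]; omega
    have hb5 : ∀ i, b i < 5 := fun i => by have := hd3 i; simp only [hb]; omega
    obtain ⟨x, hxn⟩ := exists_of_digits (p := 5) a
    obtain ⟨y, hyn⟩ := exists_of_digits (p := 5) b
    have hxappr : ∀ n, x.appr n = S 5 a n := appr_eq_of_norm x a ha5 hxn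
    have hyappr : ∀ n, y.appr n = S 5 b n := appr_eq_of_norm y b hb5 hyn
    have hxd : ∀ k, padicDigit 5 x k = a k := digit_eq_of_appr x a ha5 hxappr
    have hyd : ∀ k, padicDigit 5 y k = b k := digit_eq_of_appr y b hb5 hyappr
    refine ⟨x, ?_, y, ?_, ?_⟩
    · intro k
      rw [hxd k]
      simp only [Set.mem_insert_iff, Set.mem_singleton_iff, ha]
      omega
    · intro k
      rw [hyd k]
      have := hd3 k
      simp only [Set.mem_insert_iff, Set.mem_singleton_iff, hb]
      omega
    · have key : ∀ n : ℕ, ‖x + y - z‖ ≤ ((5 : ℕ) : ℝ) ^ (-n : ℤ) := by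
        intro n
        rw [PadicInt.norm_le_pow_iff_mem_span_pow]
        have hz1 : z - (S 5 d n : ℤ_[5]) ∈ Ideal.span {((5 : ℕ) : ℤ_[5]) ^ n} := by
          rw [← appr_eq_S]; exact PadicInt.appr_spec n z
        have hx1 : x - (S 5 a n : ℤ_[5]) ∈ Ideal.span {((5 : ℕ) : ℤ_[5]) ^ n} := by
          rw [← PadicInt.norm_le_pow_iff_mem_span_pow]; exact hxn n
        have hy1 : y - (S 5 b n : ℤ_[5]) ∈ Ideal.span {((5 : ℕ) : ℤ_[5]) ^ n} := by
          rw [← PadicInt.norm_le_pow_iff_mem_span_pow]; exact hyn n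
        have hSsum : (S 5 a n : ℤ_[5]) + (S 5 b n : ℤ_[5]) = (S 5 d n : ℤ_[5]) := by
          have : S 5 a n + S 5 b n = S 5 d n := by
            simp only [S, ← Finset.sum_add_distrib, ← add_mul]
            exact Finset.sum_congr rfl fun i _ => by rw [hab i]
          exact_mod_cast congrArg (Nat.cast : ℕ → ℤ_[5]) this
        have := Ideal.sub_mem _ (Ideal.add_mem _ hx1 hy1) hz1
        convert this using 1
        rw [← hSsum]
        ring
      have h0 : ‖x + y - z‖ ≤ 0 := ge_of_tendsto' (tendsto_pow_neg (p := 5)) key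
      have : x + y - z = 0 := by
        rw [← norm_eq_zero (a := x + y - z)]
        exact le_antisymm h0 (norm_nonneg _)
      exact sub_eq_zero.mp this
end

section
/- If r ∈ ℚ is a rational number with |r|_p ≤ 1 (i.e., r is p-integral), then the p-adic digit sequence of r, viewed as an element of ℤ_p, is eventually periodic. -/
open scoped Pointwise

namespace PadicPeriodicAux

variable {p : ℕ} [hp : Fact p.Prime]

lemma p_dvd_sub_appr_one (x : ℤ_[p]) : (p : ℤ_[p]) ∣ x - (x.appr 1 : ℤ_[p]) := by
  have := PadicInt.appr_spec 1 x
  rwa [Ideal.mem_span_singleton, pow_one] at this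

/-- `(x - x.appr 1) / p`. -/
noncomputable def shift (x : ℤ_[p]) : ℤ_[p] := (p_dvd_sub_appr_one x).choose

lemma shift_spec (x : ℤ_[p]) : (p : ℤ_[p]) * shift x = x - (x.appr 1 : ℤ_[p]) :=
  (p_dvd_sub_appr_one x).choose_spec.symm

/-- uniqueness of `appr`. -/
lemma appr_unique (x : ℤ_[p]) (n : ℕ) (a : ℕ) (ha : a < p ^ n)
    (hd : (p : ℤ_[p]) ^ n ∣ x - (a : ℤ_[p])) : x.appr n = a := by
  have h1 := PadicInt.appr_spec n x
  rw [Ideal.mem_span_singleton] at h1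
  have h2 : (p : ℤ_[p]) ^ n ∣ (((a : ℤ) - (x.appr n : ℤ) : ℤ) : ℤ_[p]) := by
    have := dvd_sub h1 hd
    have heq : (x - (x.appr n : ℤ_[p])) - (x - (a : ℤ_[p]))
        = (((a : ℤ) - (x.appr n : ℤ) : ℤ) : ℤ_[p]) := by push_cast; ring
    rwa [heq] at this
  have hnorm : ‖((((a : ℤ) - (x.appr n : ℤ) : ℤ)) : ℤ_[p])‖ ≤ (p : ℝ) ^ (-(n : ℤ)) := by
    rw [PadicInt.norm_le_pow_iff_mem_span_pow, Ideal.mem_span_singleton]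
    exact h2
  have hdvd : ((p : ℤ) ^ n) ∣ ((a : ℤ) - (x.appr n : ℤ)) :=
    PadicInt.norm_int_le_pow_iff_dvd.mp hnorm
  have habs : |(a : ℤ) - (x.appr n : ℤ)| < (p : ℤ) ^ n := by
    have h3 := PadicInt.appr_lt x n
    have h4 : ((p : ℤ)) ^ n = ((p ^ n : ℕ) : ℤ) := by push_cast; ring
    rw [h4, abs_lt]
    constructor <;> [skip; skip] <;> omega
  have := Int.eq_zero_of_abs_lt_dvd hdvd habs
  omega

lemma appr_one_lt (x : ℤ_[p]) : x.appr 1 < p := by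
  have := PadicInt.appr_lt x 1; rwa [pow_one] at this

lemma appr_succ (x : ℤ_[p]) (n : ℕ) :
    x.appr (n + 1) = x.appr 1 + p * (shift x).appr n := by
  apply appr_unique
  · have h1 := appr_one_lt x
    have h2 := PadicInt.appr_lt (shift x) n
    calc x.appr 1 + p * (shift x).appr n < p + p * (shift x).appr n := by omega
      _ = p * ((shift x).appr n + 1) := by ring
      _ ≤ p * p ^ n := Nat.mul_le_mul_left _ h2
      _ = p ^ (n + 1) := by ring
  · have hA := PadicInt.appr_spec n (shift x)
    rw [Ideal.mem_span_singleton] at hA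
    obtain ⟨c, hc⟩ := hA
    refine ⟨c, ?_⟩
    have hs := shift_spec x
    push_cast
    linear_combination (p : ℤ_[p]) * hc - hs

lemma padicDigit_succ (x : ℤ_[p]) (k : ℕ) :
    padicDigit p x (k + 1) = padicDigit p (shift x) k := by
  unfold padicDigit
  rw [appr_succ x (k + 1)]
  have h1 := appr_one_lt x
  have hp0 : 0 < p := hp.out.pos
  rw [pow_succ', ← Nat.div_div_eq_div_mul,
    Nat.add_mul_div_left _ _ hp0, Nat.div_eq_of_lt h1, Nat.zero_add]

lemma padicDigit_iterate (x : ℤ_[p]) (k : ℕ) :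
    padicDigit p x k = padicDigit p (shift^[k] x) 0 := by
  induction k generalizing x with
  | zero => simp
  | succ n ih =>
    rw [padicDigit_succ, ih, Function.iterate_succ_apply]

lemma padicDigit_zero_eq (x : ℤ_[p]) : padicDigit p x 0 = x.appr 1 := by
  unfold padicDigit
  have h1 := appr_one_lt x
  simp [Nat.mod_eq_of_lt h1]

lemma padicDigit_lt (x : ℤ_[p]) (k : ℕ) : padicDigit p x k < p :=
  Nat.mod_lt _ hp.out.pos

/-- numerator sequence for the shifted rationals. -/
noncomputable def aSeq (p : ℕ) [Fact p.Prime] (x : ℤ_[p]) (b : ℕ) (a0 : ℤ) : ℕ → ℤ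
  | 0 => a0
  | n + 1 => (aSeq p x b a0 n - padicDigit p (shift^[n] x) 0 * b) / p

lemma aSeq_key (x : ℤ_[p]) (b : ℕ) (a0 : ℤ)
    (hbx : (b : ℤ_[p]) * x = (a0 : ℤ_[p])) (hb : 0 < b) (n : ℕ) :
    (b : ℤ_[p]) * (shift^[n] x) = (aSeq p x b a0 n : ℤ_[p]) ∧
      |aSeq p x b a0 n| ≤ max |a0| (b : ℤ) := by
  induction n with
  | zero => exact ⟨by simpa [aSeq] using hbx, le_max_left _ _⟩
  | succ n ih =>
    obtain ⟨ih1, ih2⟩ := ih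
    set y := shift^[n] x with hy
    set c := padicDigit p y 0 with hcdef
    have hcp : c < p := padicDigit_lt y 0
    have happr : y.appr 1 = c := (padicDigit_zero_eq y).symm
    have hs := shift_spec y
    have key : (p : ℤ_[p]) * ((b : ℤ_[p]) * shift y)
        = ((aSeq p x b a0 n - (c : ℤ) * (b : ℤ) : ℤ) : ℤ_[p]) := by
      push_cast
      rw [happr] at hs
      linear_combination (b : ℤ_[p]) * hs + ih1
    have hdvd : ((p : ℤ)) ∣ (aSeq p x b a0 n - (c : ℤ) * (b : ℤ)) := by
      have hnorm : ‖(((aSeq p x b a0 n - (c : ℤ) * (b : ℤ) : ℤ)) : ℤ_[p])‖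
          ≤ (p : ℝ) ^ (-(1 : ℕ) : ℤ) := by
        rw [← key, norm_mul]
        have h1 : ‖(p : ℤ_[p])‖ = (p : ℝ)⁻¹ := PadicInt.norm_p
        have h2 : ‖(b : ℤ_[p]) * shift y‖ ≤ 1 := PadicInt.norm_le_one _
        calc ‖(p : ℤ_[p])‖ * ‖(b : ℤ_[p]) * shift y‖ ≤ ‖(p : ℤ_[p])‖ * 1 := by
              apply mul_le_mul_of_nonneg_left h2 (norm_nonneg _)
          _ = (p : ℝ) ^ (-(1 : ℕ) : ℤ) := by
              rw [mul_one, h1]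
              simp
      have := PadicInt.norm_int_le_pow_iff_dvd.mp hnorm
      simpa using this
    have hnext : aSeq p x b a0 (n + 1) = (aSeq p x b a0 n - (c : ℤ) * (b : ℤ)) / p := by
      simp [aSeq, ← hy, ← hcdef]
    have hmul : (p : ℤ) * aSeq p x b a0 (n + 1) = aSeq p x b a0 n - (c : ℤ) * (b : ℤ) := by
      rw [hnext]
      exact Int.mul_ediv_cancel' hdvd
    constructor
    · rw [Function.iterate_succ_apply', ← hy]
      have : (p : ℤ_[p]) * ((b : ℤ_[p]) * shift y)
          = (p : ℤ_[p]) * (aSeq p x b a0 (n + 1) : ℤ_[p]) := by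
        rw [key, ← hmul]; push_cast; ring
      have hpne : (p : ℤ_[p]) ≠ 0 := by
        exact_mod_cast Nat.cast_ne_zero.mpr hp.out.ne_zero
      exact mul_left_cancel₀ hpne this
    · set C : ℤ := max |a0| (b : ℤ) with hC
      have hbC : (b : ℤ) ≤ C := le_max_right _ _
      have hCpos : 0 < C := lt_of_lt_of_le (by exact_mod_cast hb) hbC
      have habs : |(p : ℤ) * aSeq p x b a0 (n + 1)| ≤ (p : ℤ) * C := by
        rw [hmul]
        calc |aSeq p x b a0 n - (c : ℤ) * (b : ℤ)|
            ≤ |aSeq p x b a0 n| + |(c : ℤ) * (b : ℤ)| := abs_sub (aSeq p x b a0 n) ((c : ℤ) * (b : ℤ))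
          _ ≤ C + (c : ℤ) * (b : ℤ) := by
              have : |(c : ℤ) * (b : ℤ)| = (c : ℤ) * (b : ℤ) := abs_of_nonneg (by positivity)
              omega
          _ ≤ C + ((p : ℤ) - 1) * C := by
              have hclt : (c : ℤ) < (p : ℤ) := by exact_mod_cast hcp
              have hc' : (c : ℤ) ≤ (p : ℤ) - 1 := by omega
              have : (c : ℤ) * (b : ℤ) ≤ ((p : ℤ) - 1) * C := by
                apply mul_le_mul hc' hbC (by positivity) (by omega)
              omega
          _ = (p : ℤ) * C := by ring
      rw [abs_mul, abs_of_nonneg (by positivity : (0:ℤ) ≤ (p:ℤ))] at habs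
      have hppos : (0 : ℤ) < p := by exact_mod_cast hp.out.pos
      exact le_of_mul_le_mul_left habs hppos

end PadicPeriodicAux

open PadicPeriodicAux in
/-- If r ∈ ℚ is p-integral (|r|_p ≤ 1), then the p-adic digit sequence of r,
viewed as an element of ℤ_p, is eventually periodic. -/
theorem padic_digits_of_rat_eventually_periodic (p : ℕ) [Fact p.Prime]
    (r : ℚ) (h : ‖(r : ℚ_[p])‖ ≤ 1) :
    ∃ Q₀ Q : ℕ, 1 ≤ Q ∧ ∀ k, Q₀ ≤ k →
      padicDigit p (⟨(r : ℚ_[p]), h⟩ : ℤ_[p]) (k + Q) =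
        padicDigit p (⟨(r : ℚ_[p]), h⟩ : ℤ_[p]) k := by
  set x : ℤ_[p] := (⟨(r : ℚ_[p]), h⟩ : ℤ_[p]) with hx
  have hbx : ((r.den : ℕ) : ℤ_[p]) * x = ((r.num : ℤ) : ℤ_[p]) := by
    apply Subtype.ext
    push_cast
    show (r.den : ℚ_[p]) * (r : ℚ_[p]) = (r.num : ℚ_[p])
    have hq : (r.den : ℚ) * r = (r.num : ℚ) := by
      rw [mul_comm, Rat.mul_den_eq_num]
    exact_mod_cast congrArg (fun q : ℚ => (q : ℚ_[p])) hq
  have hb : 0 < r.den := r.pos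
  set a : ℕ → ℤ := aSeq p x r.den r.num with ha
  set C : ℤ := max |r.num| (r.den : ℤ) with hC
  have hkey := fun n => aSeq_key x r.den r.num hbx hb n
  -- pigeonhole
  haveI : Finite (Set.Icc (-C) C) := (Set.finite_Icc (-C) C).to_subtype
  obtain ⟨i, j, hne, hf⟩ := Finite.exists_ne_map_eq_of_infinite
    (f := fun n : ℕ => (⟨a n, by
      have := (hkey n).2
      rw [Set.mem_Icc]
      constructor <;> [exact neg_le_of_abs_le this; exact le_of_abs_le this]⟩ : Set.Icc (-C) C))
  have haij : a i = a j := congrArg Subtype.val hf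
  -- wlog i < j
  obtain ⟨i, j, hij, haij⟩ : ∃ i j : ℕ, i < j ∧ a i = a j := by
    rcases hne.lt_or_gt with h' | h'
    · exact ⟨i, j, h', haij⟩
    · exact ⟨j, i, h', haij.symm⟩
  have hbne : ((r.den : ℕ) : ℤ_[p]) ≠ 0 := Nat.cast_ne_zero.mpr hb.ne'
  have hyij : shift^[i] x = shift^[j] x := by
    apply mul_left_cancel₀ hbne
    rw [(hkey i).1, (hkey j).1]
    exact congrArg (fun z : ℤ => (z : ℤ_[p])) haij
  have hiter : ∀ m : ℕ, shift^[m + i] x = shift^[m + j] x := by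
    intro m
    rw [Function.iterate_add_apply, Function.iterate_add_apply, hyij]
  refine ⟨i, j - i, by omega, fun k hk => ?_⟩
  have h1 : k + (j - i) = (k - i) + j := by omega
  have h2 : k = (k - i) + i := by omega
  rw [padicDigit_iterate x (k + (j - i)), padicDigit_iterate x k,
    h1, ← hiter (k - i), ← h2]
end

section
/- For a prime p and digit sets D_1, D_2 ⊆ {0,...,p-1} such that d_1 + d_2 ≤ p - 1 for all d_1 ∈ D_1, d_2 ∈ D_2, the Minkowski sum satisfies Σ_p(D_1) + Σ_p(D_2) = Σ_p(D_1 + D_2), where D_1 + D_2 = {d_1 + d_2 : d_i ∈ D_i}. -/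
open scoped Pointwise

section Aux

variable {p : ℕ} [hp : Fact p.Prime]

private lemma one_lt_p : 1 < p := hp.out.one_lt

/-- Uniqueness of the `n`-th approximation. -/
private lemma appr_unique (x : ℤ_[p]) (n a : ℕ) (ha : a < p ^ n)
    (h : x - (a : ℤ_[p]) ∈ Ideal.span {(p : ℤ_[p]) ^ n}) : x.appr n = a := by
  have h2 := PadicInt.appr_spec n x
  have h3 : ((((x.appr n : ℤ) - (a : ℤ)) : ℤ) : ℤ_[p]) ∈ Ideal.span {(p : ℤ_[p]) ^ n} := by
    have hmem := Ideal.sub_mem _ h h2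
    have heq : ((((x.appr n : ℤ) - (a : ℤ)) : ℤ) : ℤ_[p]) = (x - a) - (x - x.appr n) := by
      push_cast
      ring
    rw [heq]
    exact hmem
  rw [← PadicInt.norm_le_pow_iff_mem_span_pow, PadicInt.norm_int_le_pow_iff_dvd] at h3
  have hlt : (x.appr n : ℤ) < (p : ℤ) ^ n := by exact_mod_cast x.appr_lt n
  have ha' : (a : ℤ) < (p : ℤ) ^ n := by exact_mod_cast ha
  have hnn : (0 : ℤ) ≤ (x.appr n : ℤ) := Int.natCast_nonneg _
  have hnn' : (0 : ℤ) ≤ (a : ℤ) := Int.natCast_nonneg _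
  have habs : |((x.appr n : ℤ) - a)| < (p : ℤ) ^ n := by
    rw [abs_lt]
    omega
  have hz := Int.eq_zero_of_abs_lt_dvd h3 habs
  omega

private lemma appr_succ (x : ℤ_[p]) (n : ℕ) :
    x.appr (n + 1) = x.appr n + x.appr (n + 1) / p ^ n * p ^ n := by
  obtain ⟨c, hc⟩ := x.dvd_appr_sub_appr n (n + 1) (by omega)
  have hm : x.appr n ≤ x.appr (n + 1) := x.appr_mono (by omega)
  have h1 : x.appr (n + 1) = x.appr n + p ^ n * c := by omega
  have hlt := x.appr_lt n
  have hpn : 0 < p ^ n := pow_pos (lt_trans one_pos one_lt_p) n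
  have hdiv : x.appr (n + 1) / p ^ n = c := by
    rw [h1, Nat.add_mul_div_left _ _ hpn, Nat.div_eq_of_lt hlt, Nat.zero_add]
  rw [hdiv, h1]
  ring

private lemma padicDigit_eq (x : ℤ_[p]) (n : ℕ) :
    padicDigit p x n = x.appr (n + 1) / p ^ n := by
  unfold padicDigit
  apply Nat.mod_eq_of_lt
  have := x.appr_lt (n + 1)
  rw [Nat.div_lt_iff_lt_mul (pow_pos (lt_trans one_pos one_lt_p) n)]
  exact lt_of_lt_of_le this (le_of_eq (by ring))

private lemma appr_eq_sum (x : ℤ_[p]) (n : ℕ) :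
    x.appr n = ∑ k ∈ Finset.range n, padicDigit p x k * p ^ k := by
  induction n with
  | zero =>
    have := x.appr_lt 0
    simpa using Nat.lt_one_iff.mp (by simpa using this)
  | succ n ih =>
    rw [Finset.sum_range_succ, ← ih, padicDigit_eq]
    exact appr_succ x n

private lemma sum_lt (d : ℕ → ℕ) (hd : ∀ k, d k < p) (n : ℕ) :
    ∑ k ∈ Finset.range n, d k * p ^ k < p ^ n := by
  induction n with
  | zero => simp
  | succ n ih =>
    rw [Finset.sum_range_succ]
    have h1 : (d n + 1) * p ^ n ≤ p * p ^ n := Nat.mul_le_mul_right _ (hd n)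
    have h2 : (d n + 1) * p ^ n = d n * p ^ n + p ^ n := by ring
    have h3 : p ^ (n + 1) = p * p ^ n := by ring
    omega

private lemma sum_digit (d : ℕ → ℕ) (hd : ∀ k, d k < p) (n : ℕ) :
    (∑ k ∈ Finset.range (n + 1), d k * p ^ k) / p ^ n % p = d n := by
  have hpn : 0 < p ^ n := pow_pos (lt_trans one_pos one_lt_p) n
  rw [Finset.sum_range_succ, Nat.add_mul_div_right _ _ hpn,
    Nat.div_eq_of_lt (sum_lt d hd n), Nat.zero_add, Nat.mod_eq_of_lt (hd n)]

private lemma norm_nat_sub_le {a : ℤ_[p]} {b : ℕ} {n : ℕ}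
    (h : a - (b : ℤ_[p]) ∈ Ideal.span {(p : ℤ_[p]) ^ n}) :
    ‖a - (b : ℤ_[p])‖ ≤ (p : ℝ) ^ (-n : ℤ) :=
  (PadicInt.norm_le_pow_iff_mem_span_pow _ n).mpr h

/-- Existence of a `p`-adic integer with prescribed digits. -/
private lemma exists_padic (d : ℕ → ℕ) (hd : ∀ k, d k < p) :
    ∃ x : ℤ_[p], ∀ n, x.appr n = ∑ k ∈ Finset.range n, d k * p ^ k := by
  set s : ℕ → ℕ := fun n => ∑ k ∈ Finset.range n, d k * p ^ k with hs
  set u : ℕ → ℤ_[p] := fun n => (s n : ℤ_[p]) with hu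
  have key : ∀ {n m : ℕ}, n ≤ m → ‖u m - u n‖ ≤ (p : ℝ) ^ (-n : ℤ) := by
    intro n m hnm
    have hsub : u m - u n = ((∑ k ∈ Finset.Ico n m, d k * p ^ k : ℕ) : ℤ_[p]) := by
      simp only [hu, hs]
      rw [← Finset.sum_range_add_sum_Ico _ hnm]
      push_cast
      ring
    have hdvd : (p : ℕ) ^ n ∣ ∑ k ∈ Finset.Ico n m, d k * p ^ k := by
      apply Finset.dvd_sum
      intro k hk
      exact Dvd.dvd.mul_left (pow_dvd_pow p (Finset.mem_Ico.mp hk).1) _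
    rw [hsub]
    have : (((∑ k ∈ Finset.Ico n m, d k * p ^ k : ℕ) : ℤ) : ℤ_[p]) =
        ((∑ k ∈ Finset.Ico n m, d k * p ^ k : ℕ) : ℤ_[p]) := by push_cast; ring
    rw [← this, PadicInt.norm_int_le_pow_iff_dvd]
    exact_mod_cast hdvd
  have hb : Filter.Tendsto (fun n : ℕ => (p : ℝ) ^ (-n : ℤ)) Filter.atTop (nhds 0) := by
    have h1 : Filter.Tendsto (fun n : ℕ => ((p : ℝ)⁻¹) ^ n) Filter.atTop (nhds 0) := by
      apply tendsto_pow_atTop_nhds_zero_of_lt_one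
      · positivity
      · rw [inv_lt_one_iff₀]
        right
        exact_mod_cast one_lt_p
    convert h1 using 2 with n
    rw [zpow_neg, inv_pow, zpow_natCast]
  have hmono : ∀ {N n : ℕ}, N ≤ n → (p : ℝ) ^ (-n : ℤ) ≤ (p : ℝ) ^ (-N : ℤ) := by
    intro N n hNn
    apply zpow_le_zpow_right₀
    · exact_mod_cast le_of_lt one_lt_p
    · omega
  have hcauchy : CauchySeq u := by
    apply cauchySeq_of_le_tendsto_0 (fun n : ℕ => (p : ℝ) ^ (-n : ℤ)) _ hb
    intro n m N hn hm
    rcases le_total n m with h | h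
    · rw [dist_eq_norm, norm_sub_rev]
      exact le_trans (key h) (hmono hn)
    · rw [dist_eq_norm]
      exact le_trans (key h) (hmono hm)
  obtain ⟨x, hx⟩ := cauchySeq_tendsto_of_complete hcauchy
  refine ⟨x, fun n => appr_unique x n (s n) (sum_lt d hd n) ?_⟩
  rw [← PadicInt.norm_le_pow_iff_mem_span_pow]
  have htend : Filter.Tendsto (fun m => ‖u m - u n‖) Filter.atTop (nhds ‖x - (s n : ℤ_[p])‖) :=
    ((hx.sub tendsto_const_nhds).norm)
  exact le_of_tendsto htend (Filter.eventually_atTop.mpr ⟨n, fun m hm => key hm⟩)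

private lemma eq_of_forall_norm_le {x y : ℤ_[p]}
    (h : ∀ n : ℕ, ‖x - y‖ ≤ (p : ℝ) ^ (-n : ℤ)) : x = y := by
  have hb : Filter.Tendsto (fun n : ℕ => (p : ℝ) ^ (-n : ℤ)) Filter.atTop (nhds 0) := by
    have h1 : Filter.Tendsto (fun n : ℕ => ((p : ℝ)⁻¹) ^ n) Filter.atTop (nhds 0) := by
      apply tendsto_pow_atTop_nhds_zero_of_lt_one
      · positivity
      · rw [inv_lt_one_iff₀]
        right
        exact_mod_cast one_lt_p
    convert h1 using 2 with n
    rw [zpow_neg, inv_pow, zpow_natCast]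
  have : ‖x - y‖ ≤ 0 := ge_of_tendsto hb (Filter.Eventually.of_forall h)
  have : ‖x - y‖ = 0 := le_antisymm this (norm_nonneg _)
  rwa [norm_eq_zero, sub_eq_zero] at this

end Aux

/-- If d₁ + d₂ ≤ p - 1 for all d₁ ∈ D₁, d₂ ∈ D₂ (no carries), then
Σ_p(D₁) + Σ_p(D₂) = Σ_p(D₁ + D₂). -/
theorem sigmaSet_minkowski_sum_no_carry (p : ℕ) [Fact p.Prime] (D₁ D₂ : Set ℕ)
    (hD₁ : ∀ d ∈ D₁, d < p) (hD₂ : ∀ d ∈ D₂, d < p)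
    (hcarry : ∀ d₁ ∈ D₁, ∀ d₂ ∈ D₂, d₁ + d₂ ≤ p - 1) :
    SigmaSet p D₁ + SigmaSet p D₂ = SigmaSet p (D₁ + D₂) := by
  have hp1 : 1 < p := (Fact.out : p.Prime).one_lt
  ext z
  constructor
  · rintro ⟨x, hx, y, hy, rfl⟩
    have hdsum : ∀ k, padicDigit p x k + padicDigit p y k < p := by
      intro k
      have := hcarry _ (hx k) _ (hy k)
      omega
    have hsum : ∀ m, (x + y).appr m =
        ∑ k ∈ Finset.range m, (padicDigit p x k + padicDigit p y k) * p ^ k := by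
      intro m
      apply appr_unique
      · exact sum_lt _ hdsum m
      · have hc : ((∑ k ∈ Finset.range m,
            (padicDigit p x k + padicDigit p y k) * p ^ k : ℕ) : ℤ_[p]) =
            (x.appr m : ℤ_[p]) + (y.appr m : ℤ_[p]) := by
          rw [appr_eq_sum x m, appr_eq_sum y m]
          push_cast
          rw [← Finset.sum_add_distrib]
          congr 1
          ext k
          ring
        rw [hc]
        have h1 := PadicInt.appr_spec m x
        have h2 := PadicInt.appr_spec m y
        have := Ideal.add_mem _ h1 h2
        convert this using 1
        ring
    intro k
    have : padicDigit p (x + y) k = padicDigit p x k + padicDigit p y k := by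
      unfold padicDigit
      rw [hsum (k + 1)]
      exact sum_digit _ hdsum k
    rw [this]
    exact Set.add_mem_add (hx k) (hy k)
  · intro hz
    choose d₁ h₁ d₂ h₂ hdz using fun k => Set.mem_add.mp (hz k)
    have hd₁ : ∀ k, d₁ k < p := fun k => hD₁ _ (h₁ k)
    have hd₂ : ∀ k, d₂ k < p := fun k => hD₂ _ (h₂ k)
    obtain ⟨x, hx⟩ := exists_padic d₁ hd₁
    obtain ⟨y, hy⟩ := exists_padic d₂ hd₂
    have hxd : ∀ k, padicDigit p x k = d₁ k := by
      intro k
      unfold padicDigit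
      rw [hx (k + 1)]
      exact sum_digit _ hd₁ k
    have hyd : ∀ k, padicDigit p y k = d₂ k := by
      intro k
      unfold padicDigit
      rw [hy (k + 1)]
      exact sum_digit _ hd₂ k
    refine ⟨x, fun k => by rw [hxd k]; exact h₁ k, y, fun k => by rw [hyd k]; exact h₂ k, ?_⟩
    apply eq_of_forall_norm_le
    intro n
    rw [PadicInt.norm_le_pow_iff_mem_span_pow]
    have happr : (x.appr n : ℤ_[p]) + (y.appr n : ℤ_[p]) = (z.appr n : ℤ_[p]) := by
      rw [hx n, hy n, appr_eq_sum z n]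
      push_cast
      rw [← Finset.sum_add_distrib]
      congr 1
      ext k
      rw [← hdz k]
      push_cast
      ring
    have h1 := PadicInt.appr_spec n x
    have h2 := PadicInt.appr_spec n y
    have h3 := PadicInt.appr_spec n z
    have := Ideal.sub_mem _ (Ideal.add_mem _ h1 h2) h3
    convert this using 1
    rw [← happr]
    ring
end

section
/- Let A be a nonnegative square integer matrix and let N_k(A) = eᵀ A^k e where e is the all-ones vector. Then the limit lim_{k→∞} N_k(A)^{1/k} exists and equals the spectral radius σ(A), provided A is not nilpotent. -/
open scoped ENNReal NNReal
open Filter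

/-- The spectral radius of a real matrix: the supremum of the moduli of its
(complex) eigenvalues. -/
noncomputable def specRad {n : ℕ} (M : Matrix (Fin n) (Fin n) ℝ) : ℝ :=
  sSup ((fun z : ℂ => ‖z‖) '' spectrum ℂ (M.map Complex.ofReal))

/-- For a non-nilpotent nonnegative integer matrix A, with N_k(A) = eᵀA^k e the sum of
entries of A^k, the limit lim_{k→∞} N_k(A)^{1/k} exists and equals the spectral
radius σ(A). -/
theorem tendsto_entrySum_pow_rpow_specRad {n : ℕ} (A : Matrix (Fin n) (Fin n) ℝ)
    (hA : ∀ i j, ∃ m : ℕ, A i j = (m : ℝ)) (hnil : ¬ IsNilpotent A) :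
    Filter.Tendsto (fun k : ℕ => (∑ i, ∑ j, (A ^ k) i j) ^ ((k : ℝ)⁻¹))
      Filter.atTop (nhds (specRad A)) := by
  classical
  -- n ≠ 0
  have hn : n ≠ 0 := by
    rintro rfl
    exact hnil ⟨1, Subsingleton.elim _ _⟩
  haveI : NeZero n := ⟨hn⟩
  letI : SeminormedRing (Matrix (Fin n) (Fin n) ℂ) := Matrix.linftyOpSemiNormedRing
  letI : NormedRing (Matrix (Fin n) (Fin n) ℂ) := Matrix.linftyOpNormedRing
  letI : NormedAlgebra ℂ (Matrix (Fin n) (Fin n) ℂ) := Matrix.linftyOpNormedAlgebra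
  letI : CompleteSpace (Matrix (Fin n) (Fin n) ℂ) :=
    FiniteDimensional.complete ℂ (Matrix (Fin n) (Fin n) ℂ)
  set B : Matrix (Fin n) (Fin n) ℂ := A.map Complex.ofReal with hB
  -- entries of A^k are nonneg
  have hpos : ∀ k i j, 0 ≤ (A ^ k) i j := by
    intro k
    induction k with
    | zero => intro i j; by_cases h : i = j <;> simp [h, Matrix.one_apply]
    | succ k ih =>
      intro i j
      rw [pow_succ, Matrix.mul_apply]
      exact Finset.sum_nonneg fun x _ => mul_nonneg (ih i x)
        (by obtain ⟨m, hm⟩ := hA x j; rw [hm]; positivity)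
  have hBk : ∀ k : ℕ, B ^ k = (A ^ k).map Complex.ofReal := by
    intro k
    exact (map_pow (Complex.ofRealHom.mapMatrix) A k).symm
  -- norm of B^k
  have hnorm : ∀ k : ℕ, ‖B ^ k‖₊ =
      (Finset.univ : Finset (Fin n)).sup fun i => ∑ j, ‖(A ^ k) i j‖₊ := by
    intro k
    rw [hBk k, Matrix.linfty_opNNNorm_def]
    congr 1
    ext i
    simp [Matrix.map_apply]
  set S : ℕ → ℝ := fun k => ∑ i, ∑ j, (A ^ k) i j with hS
  have hSnn : ∀ k, S k = ((∑ i, ∑ j, ‖(A ^ k) i j‖₊ : ℝ≥0) : ℝ) := by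
    intro k
    push_cast
    refine Finset.sum_congr rfl fun i _ => Finset.sum_congr rfl fun j _ => ?_
    exact (Real.norm_of_nonneg (hpos k i j)).symm
  -- comparison
  have hlow : ∀ k, ‖B ^ k‖ ≤ S k := by
    intro k
    rw [hSnn k, ← coe_nnnorm, NNReal.coe_le_coe, hnorm k]
    exact Finset.sup_le fun i _ =>
      Finset.single_le_sum (f := fun i => ∑ j, ‖(A ^ k) i j‖₊) (fun _ _ => zero_le)
        (Finset.mem_univ i)
  have hhigh : ∀ k, S k ≤ n * ‖B ^ k‖ := by
    intro k
    rw [hSnn k, ← coe_nnnorm]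
    have := Finset.sum_le_card_nsmul (Finset.univ : Finset (Fin n))
      (fun i => ∑ j, ‖(A ^ k) i j‖₊) (‖B ^ k‖₊)
      (fun i _ => by rw [hnorm k]; exact Finset.le_sup (f := fun i => ∑ j, ‖(A ^ k) i j‖₊) (Finset.mem_univ i))
    rw [Finset.card_univ, Fintype.card_fin, nsmul_eq_mul] at this
    calc ((∑ i, ∑ j, ‖(A ^ k) i j‖₊ : ℝ≥0) : ℝ) ≤ ((n * ‖B ^ k‖₊ : ℝ≥0) : ℝ) := by
          exact_mod_cast this
      _ = n * ‖B ^ k‖₊ := by push_cast; ring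
  -- Gelfand
  have hgel := spectrum.pow_nnnorm_pow_one_div_tendsto_nhds_spectralRadius B
  haveI : Nontrivial (Matrix (Fin n) (Fin n) ℂ) := by infer_instance
  obtain ⟨z₀, hz₀mem, hz₀⟩ := spectrum.exists_nnnorm_eq_spectralRadius B
  have hLne : spectralRadius ℂ B ≠ ⊤ := by rw [← hz₀]; exact ENNReal.coe_ne_top
  have hreal : Tendsto (fun k : ℕ => ‖B ^ k‖ ^ ((k : ℝ)⁻¹)) atTop
      (nhds (spectralRadius ℂ B).toReal) := by
    have := (ENNReal.tendsto_toReal hLne).comp hgel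
    convert this using 2 with k
    rw [Function.comp_apply, ← ENNReal.toReal_rpow, one_div, ENNReal.coe_toReal, coe_nnnorm]
  -- identify specRad with toReal of spectralRadius
  have hLtR : (spectralRadius ℂ B).toReal = ‖z₀‖ := by
    rw [← hz₀, ENNReal.coe_toReal, coe_nnnorm]
  have hspec : specRad A = (spectralRadius ℂ B).toReal := by
    rw [hLtR, specRad]
    refine IsGreatest.csSup_eq ⟨⟨z₀, hz₀mem, rfl⟩, ?_⟩
    rintro y ⟨z, hz, rfl⟩
    have : (‖z‖₊ : ℝ≥0∞) ≤ spectralRadius ℂ B := le_iSup₂ (f := fun z _ => (‖z‖₊ : ℝ≥0∞)) z hz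
    rw [← hz₀, ENNReal.coe_le_coe] at this
    exact_mod_cast this
  rw [hspec]
  -- squeeze
  have hup : Tendsto (fun k : ℕ => (n : ℝ) ^ ((k : ℝ)⁻¹) * ‖B ^ k‖ ^ ((k : ℝ)⁻¹)) atTop
      (nhds (spectralRadius ℂ B).toReal) := by
    have h1 : Tendsto (fun k : ℕ => (n : ℝ) ^ ((k : ℝ)⁻¹)) atTop (nhds 1) := by
      have h0 : Tendsto (fun k : ℕ => ((k : ℝ))⁻¹) atTop (nhds 0) :=
        tendsto_inv_atTop_zero.comp tendsto_natCast_atTop_atTop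
      have := (Real.continuousAt_const_rpow (b := 0) (a := (n : ℝ))
        (by exact_mod_cast hn)).tendsto.comp h0
      simpa [Function.comp_def] using this
    have := h1.mul hreal
    simpa using this
  refine tendsto_of_tendsto_of_tendsto_of_le_of_le' hreal hup ?_ ?_
  · filter_upwards with k
    exact Real.rpow_le_rpow (norm_nonneg _) (hlow k) (by positivity)
  · filter_upwards with k
    calc S k ^ ((k : ℝ)⁻¹) ≤ ((n : ℝ) * ‖B ^ k‖) ^ ((k : ℝ)⁻¹) :=
          Real.rpow_le_rpow (le_trans (norm_nonneg _) (hlow k)) (hhigh k) (by positivity)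
      _ = (n : ℝ) ^ ((k : ℝ)⁻¹) * ‖B ^ k‖ ^ ((k : ℝ)⁻¹) :=
          Real.mul_rpow (by positivity) (norm_nonneg _)
end
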